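/- Let k be a field, m, p ≥ 1, let u : Fin p → Polynomial k and v : Fin m → Polynomial k, and let s ∈ k. In the multivariate polynomial ring MvPolynomial (Fin m × Fin p) k, let F be the determinant of the m × m matrix whose (j, γ) entry (row j, column γ, 0-indexed) is C (eval s (derivative^[j] (v γ))) + ∑_{κ ∈ Fin p} C (eval s (derivative^[j] (u κ))) * X (γ, κ). Then for every (γ, κ) ∈ Fin m × Fin p, the coefficient in F of the degree-one monomial X (γ, κ) equals eval s (Wr (Function.update v γ (u κ))), the Wronskian of the family v with its γ-th member replaced by u κ, evaluated at s. -/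

import Mathlib

open Polynomial

lemma coeff_single_one_mul' {σ R : Type*} [CommSemiring R] [DecidableEq σ] (x : σ)
    (p q : MvPolynomial σ R) :
    MvPolynomial.coeff (Finsupp.single x 1) (p * q) =
      MvPolynomial.coeff (Finsupp.single x 1) p * MvPolynomial.constantCoeff q +
        MvPolynomial.constantCoeff p * MvPolynomial.coeff (Finsupp.single x 1) q := by
  rw [MvPolynomial.coeff_mul, Finsupp.antidiagonal_single]
  rw [show Finset.HasAntidiagonal.antidiagonal (1:ℕ) = {(0,1),(1,0)} by decide]
  simp [MvPolynomial.constantCoeff_eq, add_comm]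

lemma coeff_single_one_prod {σ R : Type*} [CommSemiring R] [DecidableEq σ] {ι : Type*}
    [DecidableEq ι] (t : Finset ι) (f : ι → MvPolynomial σ R) (x : σ) :
    MvPolynomial.coeff (Finsupp.single x 1) (∏ i ∈ t, f i) =
      ∑ i ∈ t, MvPolynomial.coeff (Finsupp.single x 1) (f i) *
        ∏ j ∈ t.erase i, MvPolynomial.constantCoeff (f j) := by
  induction t using Finset.induction with
  | empty =>
    simp only [Finset.prod_empty, Finset.sum_empty, MvPolynomial.coeff_one]
    rw [if_neg (by simp [eq_comm, Finsupp.single_eq_zero])]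
  | insert a t ha ih =>
    rw [Finset.prod_insert ha, coeff_single_one_mul', ih, Finset.sum_insert ha,
      Finset.erase_insert ha, map_prod, Finset.mul_sum]
    congr 1
    refine Finset.sum_congr rfl fun i hi => ?_
    rw [Finset.erase_insert_of_ne (by rintro rfl; exact ha hi),
      Finset.prod_insert (fun h => ha (Finset.mem_of_mem_erase h))]
    ring

/-- The Wronskian of a family `f : Fin m → Polynomial k`. -/
noncomputable def Wr {k : Type*} [Field k] {m : ℕ} (f : Fin m → Polynomial k) : Polynomial k :=
  Matrix.det (Matrix.of fun i j : Fin m => Polynomial.derivative^[(i : ℕ)] (f j))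

theorem coeff_linear_term_of_det {k : Type*} [Field k] (m p : ℕ)
    (hm : 1 ≤ m) (hp : 1 ≤ p)
    (u : Fin p → Polynomial k) (v : Fin m → Polynomial k) (s : k) :
    ∀ γ : Fin m, ∀ κ : Fin p,
      MvPolynomial.coeff (Finsupp.single (γ, κ) 1)
        (Matrix.det (Matrix.of fun j γ' : Fin m =>
          (MvPolynomial.C (Polynomial.eval s (Polynomial.derivative^[(j : ℕ)] (v γ'))) +
            ∑ κ' : Fin p,
              MvPolynomial.C (Polynomial.eval s (Polynomial.derivative^[(j : ℕ)] (u κ'))) *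
                (MvPolynomial.X (γ', κ') : MvPolynomial (Fin m × Fin p) k)))) =
      Polynomial.eval s (Wr (Function.update v γ (u κ))) := by
  intro γ κ
  classical
  rw [Wr, show (Polynomial.eval s : Polynomial k → k) = Polynomial.evalRingHom s from rfl,
    RingHom.map_det]
  rw [Matrix.det_apply, Matrix.det_apply, MvPolynomial.coeff_sum]
  refine Finset.sum_congr rfl fun σ _ => ?_
  rw [MvPolynomial.coeff_smul]
  congr 1
  rw [coeff_single_one_prod]
  rw [← Finset.mul_prod_erase Finset.univ _ (Finset.mem_univ γ)]
  rw [Finset.sum_eq_single γ ?_ ?_]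
  · congr 1
    · simp [MvPolynomial.coeff_sum, MvPolynomial.coeff_C, MvPolynomial.coeff_C_mul,
        MvPolynomial.coeff_X', Finsupp.single_eq_zero, Finsupp.single_left_inj]
      exact fun h => absurd h.symm (fun h0 => one_ne_zero (Finsupp.single_eq_zero.mp h0))
    · refine Finset.prod_congr rfl fun j hj => ?_
      have hj' : j ≠ γ := Finset.ne_of_mem_erase hj
      simp [Function.update_of_ne hj', MvPolynomial.constantCoeff_C,
        MvPolynomial.constantCoeff_X]
  · intro i _ hi
    simp [MvPolynomial.coeff_sum, MvPolynomial.coeff_C, MvPolynomial.coeff_C_mul,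
      MvPolynomial.coeff_X', Finsupp.single_eq_zero, hi]
    left
    rw [if_neg fun h => (fun h0 => one_ne_zero (Finsupp.single_eq_zero.mp h0)) h.symm, zero_add]
    refine Finset.sum_eq_zero fun x _ => ?_
    exact if_neg fun h => hi (congrArg Prod.fst ((Finsupp.single_left_inj one_ne_zero).mp h))
  · intro h; exact absurd (Finset.mem_univ γ) h
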